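/- Let (A,·,∘) be a transposed Novikov-Poisson algebra. Then the bracket [x,y] := x∘y − y∘x makes (A,·,[·,·]) a transposed Poisson algebra; in particular 2z·[x,y] = [z·x,y] + [x,z·y] for all x,y,z ∈ A. -/
import Mathlib


/-- In a transposed Novikov-Poisson algebra, the commutator bracket
[x,y] = x∘y − y∘x makes (A,·,[·,·]) a transposed Poisson algebra. -/
theorem stmt0 {k A : Type*} [Field k] [AddCommGroup A] [Module k A]
    (hchar : (2:k) ≠ 0)
    (mul cir : A →ₗ[k] A →ₗ[k] A)
    (hcomm : ∀ x y : A, mul x y = mul y x)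
    (hassoc : ∀ x y z : A, mul (mul x y) z = mul x (mul y z))
    (hnov1 : ∀ x y z : A, cir (cir x y) z = cir (cir x z) y)
    (hnov2 : ∀ x y z : A, cir (cir x y) z - cir x (cir y z) = cir (cir y x) z - cir y (cir x z))
    (htnp1 : ∀ x y z : A, cir (mul x y) z = cir (mul x z) y)
    (htnp2 : ∀ x y z : A, (2:k) • mul z (cir x y) = cir (mul z x) y + cir x (mul z y))
    (br : A → A → A)
    (hbr : ∀ x y : A, br x y = cir x y - cir y x) :
    (∀ x y : A, br x y = - br y x) ∧
    (∀ x y z : A, br (br x y) z + br (br y z) x + br (br z x) y = 0) ∧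
    (∀ x y z : A, (2:k) • mul z (br x y) = br (mul z x) y + br x (mul z y)) := by
  refine ⟨fun x y => by rw [hbr, hbr, neg_sub], fun x y z => ?_, fun x y z => ?_⟩
  · have h1 := hnov2 x y z
    have h2 := hnov2 y z x
    have h3 := hnov2 z x y
    simp only [hbr, map_sub, LinearMap.sub_apply] at *
    linear_combination (norm := abel) h1 + h2 + h3
  · have h1 := htnp2 x y z
    have h2 := htnp2 y x z
    simp only [hbr, map_sub, LinearMap.sub_apply, smul_sub] at *
    rw [h1, h2]
    abel
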